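/- Let x1 < x2 < x3 be real numbers, n1, n2, n3 > 0, and ȳ1, ȳ2, ȳ3 ∈ ℝ with (ȳ2−ȳ1)/(x2−x1) ≤ (ȳ3−ȳ1)/(x3−x1). Let η : [x1, x3] → ℝ be concave. Then there exist real numbers m, q such that Σ_{i=1}^{3} nᵢ·(ȳᵢ − η(xᵢ))² ≥ Σ_{i=1}^{3} nᵢ·(ȳᵢ − (m·xᵢ + q))², with equality possible only when η(x) = m·x + q for all x ∈ [x1, x3]. Moreover, if η is monotone nondecreasing on [x1, x3], then m can be chosen to be nonnegative. -/

import Mathlib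

lemma secant_le {x1 x3 : ℝ} {η : ℝ → ℝ} (hconc : ConcaveOn ℝ (Set.Icc x1 x3) η)
    {a b t : ℝ} (ha : a ∈ Set.Icc x1 x3) (hb : b ∈ Set.Icc x1 x3)
    (hab : a < b) (hta : a ≤ t) (htb : t ≤ b) :
    (b - t) * η a + (t - a) * η b ≤ (b - a) * η t := by
  have hba : (0:ℝ) < b - a := by linarith
  have h := hconc.2 ha hb (div_nonneg (by linarith : (0:ℝ) ≤ b - t) hba.le)
    (div_nonneg (by linarith : (0:ℝ) ≤ t - a) hba.le)
    (by rw [← add_div, div_eq_one_iff_eq hba.ne']; ring)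
  have harg : (b - t)/(b-a) * a + (t - a)/(b-a) * b = t := by field_simp; ring
  simp only [smul_eq_mul] at h; rw [harg] at h
  have h2 := mul_le_mul_of_nonneg_left h hba.le
  have e : (b-a) * ((b - t)/(b-a) * η a + (t - a)/(b-a) * η b)
      = (b - t) * η a + (t - a) * η b := by field_simp
  rw [e] at h2
  linarith

lemma affine_ext {x1 x2 x3 m q : ℝ} {η : ℝ → ℝ}
    (h12 : x1 < x2) (h23 : x2 < x3)
    (hconc : ConcaveOn ℝ (Set.Icc x1 x3) η)
    (e1 : η x1 = m * x1 + q) (e2 : η x2 = m * x2 + q) (e3 : η x3 = m * x3 + q) :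
    ∀ x ∈ Set.Icc x1 x3, η x = m * x + q := by
  intro x hx
  obtain ⟨hx1, hx3⟩ := hx
  have hm1 : x1 ∈ Set.Icc x1 x3 := ⟨le_refl _, by linarith⟩
  have hm2 : x2 ∈ Set.Icc x1 x3 := ⟨by linarith, by linarith⟩
  have hm3 : x3 ∈ Set.Icc x1 x3 := ⟨by linarith, le_refl _⟩
  have hmx : x ∈ Set.Icc x1 x3 := ⟨hx1, hx3⟩
  rcases le_total x x2 with hc | hc
  · have hlo := secant_le hconc hm1 hm2 h12 hx1 hc
    have hhi := secant_le hconc hmx hm3 (by linarith) hc h23.le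
    rw [e1, e2] at hlo
    rw [e2, e3] at hhi
    have h1 : (x2 - x1) * (m * x + q) ≤ (x2 - x1) * η x := by nlinarith [hlo]
    have h2 : (x3 - x2) * η x ≤ (x3 - x2) * (m * x + q) := by nlinarith [hhi]
    nlinarith [h1, h2, h12, h23]
  · have hlo := secant_le hconc hm2 hm3 h23 hc hx3
    have hhi := secant_le hconc hm1 hmx (by linarith) h12.le hc
    rw [e2, e3] at hlo
    rw [e1, e2] at hhi
    have h1 : (x3 - x2) * (m * x + q) ≤ (x3 - x2) * η x := by nlinarith [hlo]
    have h2 : (x2 - x1) * η x ≤ (x2 - x1) * (m * x + q) := by nlinarith [hhi]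
    nlinarith [h1, h2, h12, h23]

set_option maxHeartbeats 1600000 in
theorem concave_fit_outperformed_by_line (x1 x2 x3 n1 n2 n3 y1 y2 y3 : ℝ)
    (h12 : x1 < x2) (h23 : x2 < x3)
    (hn1 : 0 < n1) (hn2 : 0 < n2) (hn3 : 0 < n3)
    (hconvex : (y2 - y1) / (x2 - x1) ≤ (y3 - y1) / (x3 - x1))
    (η : ℝ → ℝ) (hconc : ConcaveOn ℝ (Set.Icc x1 x3) η) :
    ∃ m q : ℝ,
      (n1 * (y1 - (m * x1 + q))^2 + n2 * (y2 - (m * x2 + q))^2 +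
         n3 * (y3 - (m * x3 + q))^2 ≤
       n1 * (y1 - η x1)^2 + n2 * (y2 - η x2)^2 + n3 * (y3 - η x3)^2) ∧
      ((n1 * (y1 - (m * x1 + q))^2 + n2 * (y2 - (m * x2 + q))^2 +
          n3 * (y3 - (m * x3 + q))^2 =
        n1 * (y1 - η x1)^2 + n2 * (y2 - η x2)^2 + n3 * (y3 - η x3)^2) →
        ∀ x ∈ Set.Icc x1 x3, η x = m * x + q) ∧
      (MonotoneOn η (Set.Icc x1 x3) → 0 ≤ m) := by
  have hd1 : (0:ℝ) < x2 - x1 := by linarith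
  have hd2 : (0:ℝ) < x3 - x2 := by linarith
  have hd3 : (0:ℝ) < x3 - x1 := by linarith
  have hmm1 : x1 ∈ Set.Icc x1 x3 := ⟨le_refl _, by linarith⟩
  have hmm2 : x2 ∈ Set.Icc x1 x3 := ⟨by linarith, by linarith⟩
  have hmm3 : x3 ∈ Set.Icc x1 x3 := ⟨by linarith, le_refl _⟩
  rw [div_le_div_iff₀ hd1 hd3] at hconvex
  have hA : 0 ≤ (x3-x2)*y1 - (x3-x1)*y2 + (x2-x1)*y3 := by linarith [hconvex]
  have hB : (x3-x2)*(η x1) - (x3-x1)*(η x2) + (x2-x1)*(η x3) ≤ 0 := by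
    have := secant_le hconc hmm1 hmm3 (by linarith) h12.le h23.le
    linarith
  obtain ⟨N, hN⟩ : ∃ t : ℝ, t = (x3-x2)^2/n1 + (x3-x1)^2/n2 + (x2-x1)^2/n3 := ⟨_, rfl⟩
  have hNpos : 0 < N := by
    have t2 : 0 < (x3-x1)^2/n2 := div_pos (by positivity) hn2
    have t1 : 0 ≤ (x3-x2)^2/n1 := div_nonneg (by positivity) hn1.le
    have t3 : 0 ≤ (x2-x1)^2/n3 := div_nonneg (by positivity) hn3.le
    rw [hN]; linarith
  obtain ⟨α, hαdef⟩ : ∃ t : ℝ,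
      t = ((x3-x2)*y1 - (x3-x1)*y2 + (x2-x1)*y3) / N := ⟨_, rfl⟩
  have hαnn : 0 ≤ α := hαdef ▸ div_nonneg hA hNpos.le
  have hαN : α * N = (x3-x2)*y1 - (x3-x1)*y2 + (x2-x1)*y3 := by
    rw [hαdef]; exact div_mul_cancel₀ _ hNpos.ne'
  obtain ⟨l1, hl1⟩ : ∃ t : ℝ, t = y1 - α*(x3-x2)/n1 := ⟨_, rfl⟩
  obtain ⟨l2, hl2⟩ : ∃ t : ℝ, t = y2 + α*(x3-x1)/n2 := ⟨_, rfl⟩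
  obtain ⟨l3, hl3⟩ : ∃ t : ℝ, t = y3 - α*(x2-x1)/n3 := ⟨_, rfl⟩
  have hl0 : (x3-x2)*l1 - (x3-x1)*l2 + (x2-x1)*l3 = 0 := by
    have expand : (x3-x2)*l1 - (x3-x1)*l2 + (x2-x1)*l3
        = ((x3-x2)*y1 - (x3-x1)*y2 + (x2-x1)*y3) - α * N := by
      rw [hl1, hl2, hl3, hN]; field_simp; ring
    rw [expand, hαN]; ring
  obtain ⟨m, hm⟩ : ∃ t : ℝ, t = (l3 - l1)/(x3-x1) := ⟨_, rfl⟩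
  obtain ⟨q, hq⟩ : ∃ t : ℝ, t = l1 - m*x1 := ⟨_, rfl⟩
  have hq1 : m*x1 + q = l1 := by rw [hq]; ring
  have hq3 : m*x3 + q = l3 := by
    rw [hq, hm]; field_simp [hd3.ne']; ring
  have hq2 : m*x2 + q = l2 := by
    rw [hq, hm]; field_simp [hd3.ne']; linear_combination hl0
  have e1 : n1*(y1 - l1) = α*(x3-x2) := by
    rw [hl1]; field_simp [hn1.ne']; all_goals ring
  have e2 : n2*(y2 - l2) = -(α*(x3-x1)) := by
    rw [hl2]; field_simp [hn2.ne']; all_goals ring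
  have e3 : n3*(y3 - l3) = α*(x2-x1) := by
    rw [hl3]; field_simp [hn3.ne']; all_goals ring
  have hcross : n1*(y1-l1)*(l1-η x1) + n2*(y2-l2)*(l2-η x2) + n3*(y3-l3)*(l3-η x3)
      = α * (-((x3-x2)*(η x1) - (x3-x1)*(η x2) + (x2-x1)*(η x3))) := by
    linear_combination (l1-η x1)*e1 + (l2-η x2)*e2 + (l3-η x3)*e3 + α*hl0
  have hT : 0 ≤ n1*(y1-l1)*(l1-η x1) + n2*(y2-l2)*(l2-η x2) + n3*(y3-l3)*(l3-η x3) := by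
    rw [hcross]; exact mul_nonneg hαnn (by linarith)
  have main : n1*(y1-η x1)^2 + n2*(y2-η x2)^2 + n3*(y3-η x3)^2
      = (n1*(y1-l1)^2 + n2*(y2-l2)^2 + n3*(y3-l3)^2)
        + (n1*(l1-η x1)^2 + n2*(l2-η x2)^2 + n3*(l3-η x3)^2)
        + 2*(n1*(y1-l1)*(l1-η x1) + n2*(y2-l2)*(l2-η x2) + n3*(y3-l3)*(l3-η x3)) := by
    ring
  have hs1 : 0 ≤ n1*(l1-η x1)^2 := mul_nonneg hn1.le (sq_nonneg _)
  have hs2 : 0 ≤ n2*(l2-η x2)^2 := mul_nonneg hn2.le (sq_nonneg _)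
  have hs3 : 0 ≤ n3*(l3-η x3)^2 := mul_nonneg hn3.le (sq_nonneg _)
  have eqcase : (n1 * (y1 - l1)^2 + n2 * (y2 - l2)^2 + n3 * (y3 - l3)^2 =
        n1 * (y1 - η x1)^2 + n2 * (y2 - η x2)^2 + n3 * (y3 - η x3)^2) →
        ∀ x ∈ Set.Icc x1 x3, η x = m * x + q := by
    intro heq
    have z1 : n1*(l1-η x1)^2 = 0 := by linarith
    have z2 : n2*(l2-η x2)^2 = 0 := by linarith
    have z3 : n3*(l3-η x3)^2 = 0 := by linarith
    have w1 : η x1 = l1 := by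
      have := pow_eq_zero_iff (n := 2) (by norm_num) |>.mp
        ((mul_eq_zero.mp z1).resolve_left hn1.ne')
      linarith [sub_eq_zero.mp this]
    have w2 : η x2 = l2 := by
      have := pow_eq_zero_iff (n := 2) (by norm_num) |>.mp
        ((mul_eq_zero.mp z2).resolve_left hn2.ne')
      linarith [sub_eq_zero.mp this]
    have w3 : η x3 = l3 := by
      have := pow_eq_zero_iff (n := 2) (by norm_num) |>.mp
        ((mul_eq_zero.mp z3).resolve_left hn3.ne')
      linarith [sub_eq_zero.mp this]
    exact affine_ext h12 h23 hconc (by rw [w1, ← hq1]) (by rw [w2, ← hq2])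
      (by rw [w3, ← hq3])
  by_cases hmpos : 0 ≤ m
  · refine ⟨m, q, ?_, ?_, fun _ => hmpos⟩
    · rw [hq1, hq2, hq3]; linarith
    · rw [hq1, hq2, hq3]; exact eqcase
  · by_cases hmono : MonotoneOn η (Set.Icc x1 x3)
    swap
    · refine ⟨m, q, ?_, ?_, fun h => absurd h hmono⟩
      · rw [hq1, hq2, hq3]; linarith
      · rw [hq1, hq2, hq3]; exact eqcase
    · -- monotone case, slope m < 0: use the constant line at the weighted mean
      have hmneg : m < 0 := lt_of_not_ge hmpos
      have hc12 : η x1 ≤ η x2 := hmono hmm1 hmm2 h12.le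
      have hc23 : η x2 ≤ η x3 := hmono hmm2 hmm3 h23.le
      obtain ⟨W, hW⟩ : ∃ t : ℝ, t = n1 + n2 + n3 := ⟨_, rfl⟩
      have hWpos : 0 < W := by rw [hW]; linarith
      obtain ⟨xbar, hxbar⟩ : ∃ t : ℝ, t = (n1*x1 + n2*x2 + n3*x3)/W := ⟨_, rfl⟩
      obtain ⟨ybar, hybar⟩ : ∃ t : ℝ, t = (n1*y1 + n2*y2 + n3*y3)/W := ⟨_, rfl⟩
      have hWx : xbar * W = n1*x1 + n2*x2 + n3*x3 := by
        rw [hxbar]; exact div_mul_cancel₀ _ hWpos.ne'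
      have hWy : ybar * W = n1*y1 + n2*y2 + n3*y3 := by
        rw [hybar]; exact div_mul_cancel₀ _ hWpos.ne'
      have hybarline : ybar = m*xbar + q := by
        have key : ybar * W = (m*xbar + q) * W := by
          rw [hWy]
          linear_combination (e1 - n1*hq1) + (e2 - n2*hq2) + (e3 - n3*hq3)
            - m*hWx - q*hW
        exact mul_right_cancel₀ hWpos.ne' key
      have e0x : n1*(x1 - xbar) + n2*(x2 - xbar) + n3*(x3 - xbar) = 0 := by
        linear_combination -hWx + xbar*hW
      have f1 : n1*(y1 - ybar) = n1*(m*(x1-xbar)) + α*(x3-x2) := by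
        rw [hybarline]; linear_combination e1 - n1*hq1
      have f2 : n2*(y2 - ybar) = n2*(m*(x2-xbar)) - α*(x3-x1) := by
        rw [hybarline]; linear_combination e2 - n2*hq2
      have f3 : n3*(y3 - ybar) = n3*(m*(x3-xbar)) + α*(x2-x1) := by
        rw [hybarline]; linear_combination e3 - n3*hq3
      have hx1bar : x1 < xbar := by
        have h : x1 * W < xbar * W := by
          rw [hWx, hW]; linarith [mul_pos hn2 hd1, mul_pos hn3 hd3]
        exact lt_of_mul_lt_mul_right h hWpos.le
      have hx3bar : xbar < x3 := by
        have h : xbar * W < x3 * W := by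
          rw [hWx, hW]; linarith [mul_pos hn1 hd3, mul_pos hn2 hd2]
        exact lt_of_mul_lt_mul_right h hWpos.le
      have hSeq : n1*(x1-xbar)*(η x1) + n2*(x2-xbar)*(η x2) + n3*(x3-xbar)*(η x3)
          = n1*((xbar-x1)*(η x2-η x1)) + n3*((x3-xbar)*(η x3-η x2))
            + (η x2)*(n1*(x1 - xbar) + n2*(x2 - xbar) + n3*(x3 - xbar)) := by ring
      have hS : 0 ≤ n1*(x1-xbar)*(η x1) + n2*(x2-xbar)*(η x2) + n3*(x3-xbar)*(η x3) := by
        rw [hSeq, e0x]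
        have t1 : 0 ≤ n1*((xbar-x1)*(η x2-η x1)) :=
          mul_nonneg hn1.le (mul_nonneg (by linarith) (by linarith))
        have t3 : 0 ≤ n3*((x3-xbar)*(η x3-η x2)) :=
          mul_nonneg hn3.le (mul_nonneg (by linarith) (by linarith))
        linarith
      have hT' : n1*(y1-ybar)*(ybar-η x1) + n2*(y2-ybar)*(ybar-η x2)
            + n3*(y3-ybar)*(ybar-η x3)
          = -(m*(n1*(x1-xbar)*(η x1) + n2*(x2-xbar)*(η x2) + n3*(x3-xbar)*(η x3)))
            - α*((x3-x2)*(η x1) - (x3-x1)*(η x2) + (x2-x1)*(η x3)) := by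
        linear_combination (ybar-η x1)*f1 + (ybar-η x2)*f2 + (ybar-η x3)*f3
          + m*ybar*e0x
      have hT'nn : 0 ≤ n1*(y1-ybar)*(ybar-η x1) + n2*(y2-ybar)*(ybar-η x2)
          + n3*(y3-ybar)*(ybar-η x3) := by
        rw [hT']
        have u1 : 0 ≤ -(m*(n1*(x1-xbar)*(η x1) + n2*(x2-xbar)*(η x2)
            + n3*(x3-xbar)*(η x3))) := by
          rw [neg_nonneg]
          exact mul_nonpos_of_nonpos_of_nonneg hmneg.le hS
        have u2 : 0 ≤ α*(-((x3-x2)*(η x1) - (x3-x1)*(η x2) + (x2-x1)*(η x3))) :=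
          mul_nonneg hαnn (by linarith)
        linarith
      have main2 : n1*(y1- η x1)^2 + n2*(y2-η x2)^2 + n3*(y3-η x3)^2
          = (n1*(y1-ybar)^2 + n2*(y2-ybar)^2 + n3*(y3-ybar)^2)
            + (n1*(ybar-η x1)^2 + n2*(ybar-η x2)^2 + n3*(ybar-η x3)^2)
            + 2*(n1*(y1-ybar)*(ybar-η x1) + n2*(y2-ybar)*(ybar-η x2)
                 + n3*(y3-ybar)*(ybar-η x3)) := by ring
      have hs1' : 0 ≤ n1*(ybar-η x1)^2 := mul_nonneg hn1.le (sq_nonneg _)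
      have hs2' : 0 ≤ n2*(ybar-η x2)^2 := mul_nonneg hn2.le (sq_nonneg _)
      have hs3' : 0 ≤ n3*(ybar-η x3)^2 := mul_nonneg hn3.le (sq_nonneg _)
      refine ⟨0, ybar, ?_, ?_, fun _ => le_refl 0⟩
      · simp only [zero_mul, zero_add]; linarith
      · simp only [zero_mul, zero_add]
        intro heq
        have z1 : n1*(ybar-η x1)^2 = 0 := by linarith
        have z2 : n2*(ybar-η x2)^2 = 0 := by linarith
        have z3 : n3*(ybar-η x3)^2 = 0 := by linarith
        have w1 : η x1 = ybar := by
          have := pow_eq_zero_iff (n := 2) (by norm_num) |>.mp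
            ((mul_eq_zero.mp z1).resolve_left hn1.ne')
          linarith [sub_eq_zero.mp this]
        have w2 : η x2 = ybar := by
          have := pow_eq_zero_iff (n := 2) (by norm_num) |>.mp
            ((mul_eq_zero.mp z2).resolve_left hn2.ne')
          linarith [sub_eq_zero.mp this]
        have w3 : η x3 = ybar := by
          have := pow_eq_zero_iff (n := 2) (by norm_num) |>.mp
            ((mul_eq_zero.mp z3).resolve_left hn3.ne')
          linarith [sub_eq_zero.mp this]
        have r1 : η x1 = 0*x1 + ybar := by rw [w1]; ring
        have r2 : η x2 = 0*x2 + ybar := by rw [w2]; ring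
        have r3 : η x3 = 0*x3 + ybar := by rw [w3]; ring
        intro x hx
        have := affine_ext h12 h23 hconc r1 r2 r3 x hx
        linarith
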